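/- Let P be an irreducible stochastic n×n matrix and let 𝟏 ∈ ℝⁿ be the all-ones vector. Then the matrix A := I − P + 𝟏𝟏ᵀ is invertible, and the unique stationary row vector π of P (satisfying πP = π and π𝟏 = 1) is given by π = 𝟏ᵀ A⁻¹. -/
import Mathlib

open Matrix

/-- Stationary row vector of an irreducible stochastic matrix via the
fundamental matrix `A = I - P + 𝟏𝟏ᵀ`. -/
theorem stationary_vector_formula {n : ℕ} (P : Matrix (Fin n) (Fin n) ℝ)
    (hnonneg : ∀ i j, 0 ≤ P i j) (hrow : ∀ i, ∑ j, P i j = 1)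
    (hirr : {x : Fin n → ℝ | P.mulVec x = x} =
      (Submodule.span ℝ {(fun _ => 1 : Fin n → ℝ)} : Submodule ℝ (Fin n → ℝ)))
    (A : Matrix (Fin n) (Fin n) ℝ)
    (hA : A = 1 - P + Matrix.of (fun _ _ => (1 : ℝ))) :
    IsUnit A ∧
      ∀ π : Fin n → ℝ, (∀ i, 0 ≤ π i) → π ᵥ* P = π → (∑ i, π i) = 1 →
        π = (fun _ => (1 : ℝ)) ᵥ* A⁻¹ := by
  rcases Nat.eq_zero_or_pos n with hn | hn
  · subst hn
    constructor
    · have : A = 1 := Subsingleton.elim _ _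
      exact this ▸ isUnit_one
    · intro π _ _ _
      funext i
      exact absurd i.2 (by omega)
  have hne : Nonempty (Fin n) := ⟨⟨0, hn⟩⟩
  -- key: A is injective on column vectors
  have hinj : ∀ x : Fin n → ℝ, A.mulVec x = 0 → x = 0 := by
    intro x hx
    set s : ℝ := ∑ j, x j with hs
    have hPx : P.mulVec x = fun i => x i + s := by
      funext i
      have := congrFun hx i
      simp only [hA, add_mulVec, sub_mulVec, one_mulVec, Pi.zero_apply, Pi.add_apply,
        Pi.sub_apply] at this
      have hof : (Matrix.of (fun _ _ => (1:ℝ))).mulVec x i = s := by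
        simp [mulVec, dotProduct, hs]
      rw [hof] at this
      linarith
    -- sup bound
    obtain ⟨M, hM⟩ : ∃ M, ∀ i, |x i| ≤ M :=
      ⟨Finset.univ.sup' (Finset.univ_nonempty) (fun i => |x i|),
        fun i => Finset.le_sup' (fun j => |x j|) (Finset.mem_univ i)⟩
    have hstep : ∀ v : Fin n → ℝ, (∀ j, |v j| ≤ M) → ∀ i, |P.mulVec v i| ≤ M := by
      intro v hv i
      calc |P.mulVec v i| ≤ ∑ j, |P i j * v j| := by
            rw [show P.mulVec v i = ∑ j, P i j * v j from rfl]
            exact Finset.abs_sum_le_sum_abs _ _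
        _ ≤ ∑ j, P i j * M := by
            apply Finset.sum_le_sum
            intro j _
            rw [abs_mul, abs_of_nonneg (hnonneg i j)]
            exact mul_le_mul_of_nonneg_left (hv j) (hnonneg i j)
        _ = M := by rw [← Finset.sum_mul, hrow, one_mul]
    have hiter : ∀ k : ℕ, ∀ i, |x i + k * s| ≤ M := by
      intro k
      induction k with
      | zero => simpa using hM
      | succ k ih =>
        intro i
        have h1 : P.mulVec (fun j => x j + k * s) i = x i + (k + 1 : ℕ) * s := by
          simp only [mulVec, dotProduct]
          have : ∀ j, P i j * (x j + k * s) = P i j * x j + P i j * (k * s) := by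
            intro j; ring
          rw [Finset.sum_congr rfl (fun j _ => this j), Finset.sum_add_distrib,
            ← Finset.sum_mul, hrow, one_mul]
          have := congrFun hPx i
          simp only [mulVec, dotProduct] at this
          rw [this]
          push_cast
          ring
        calc |x i + (k + 1 : ℕ) * s| = |P.mulVec (fun j => x j + k * s) i| := by rw [h1]
          _ ≤ M := hstep _ ih i
    have hs0 : s = 0 := by
      by_contra hs0
      obtain ⟨i0⟩ := hne
      obtain ⟨k, hk⟩ := exists_nat_gt ((M + |x i0|) / |s|)
      have habs : |s| > 0 := abs_pos.mpr hs0
      have hk' : M + |x i0| < k * |s| := by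
        rw [div_lt_iff₀ habs] at hk
        linarith
      have h1 : |(k : ℝ) * s| ≤ |x i0 + k * s| + |x i0| := by
        have := abs_sub_abs_le_abs_sub ((k:ℝ) * s) (-(x i0))
        simp only [abs_neg, sub_neg_eq_add] at this
        have h2 : |(k:ℝ) * s| - |x i0| ≤ |k * s + x i0| := by linarith [this]
        rw [add_comm ((k:ℝ)*s) (x i0)] at h2
        linarith
      have h3 : |(k : ℝ) * s| = k * |s| := by
        rw [abs_mul, Nat.abs_cast]
      have := hiter k i0
      rw [h3] at h1
      linarith
    have hfix : P.mulVec x = x := by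
      funext i
      rw [hPx]; simp [hs0]
    have hmem : x ∈ (Submodule.span ℝ {(fun _ => 1 : Fin n → ℝ)} : Submodule ℝ (Fin n → ℝ)) := by
      have : x ∈ {x : Fin n → ℝ | P.mulVec x = x} := hfix
      rw [hirr] at this
      exact this
    obtain ⟨c, hc⟩ := Submodule.mem_span_singleton.mp hmem
    have hxc : ∀ i, x i = c := by
      intro i
      rw [← hc]
      simp
    have hsnc : s = n * c := by
      rw [hs]
      simp [hxc, Finset.sum_const, mul_comm]
    have hc0 : c = 0 := by
      have : (n : ℝ) * c = 0 := by rw [← hsnc, hs0]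
      rcases mul_eq_zero.mp this with h | h
      · exact absurd h (by positivity)
      · exact h
    funext i
    simp [hxc i, hc0]
  have hdet : A.det ≠ 0 := by
    intro hdet
    obtain ⟨v, hv, hv0⟩ := (Matrix.exists_mulVec_eq_zero_iff).mpr hdet
    exact hv (hinj v hv0)
  have hAu : IsUnit A := (Matrix.isUnit_iff_isUnit_det A).mpr (isUnit_iff_ne_zero.mpr hdet)
  refine ⟨hAu, ?_⟩
  intro π _ hπP hπ1
  have hπA : π ᵥ* A = fun _ => 1 := by
    funext j
    simp only [hA, vecMul_add, vecMul_sub, vecMul_one, Pi.add_apply, Pi.sub_apply, hπP]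
    have hπof : π ᵥ* (Matrix.of fun (_ _ : Fin n) => (1:ℝ)) = fun _ => (1:ℝ) := by
      funext j'
      simp [vecMul, dotProduct, hπ1]
    rw [hπof]
    ring
  have := congrArg (· ᵥ* A⁻¹) hπA
  simpa [vecMul_vecMul, Matrix.mul_nonsing_inv A (isUnit_iff_ne_zero.mpr hdet), vecMul_one]
    using this
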